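/- Let J ∈ ℕ and for each j = 0,…,J let P_j be a differential operator on complex Laurent polynomials of the form P_j = Σ_{i=0}^{M} a_{j,i}(z)(d/dz)^i with Laurent-polynomial coefficients a_{j,i} ∈ ℂ[z,z⁻¹]. Let g ∈ ℂ[z,z⁻¹]. Suppose the formal series Σ_{n∈ℤ} z^n P(n)g(z) vanishes, where P(n) = Σ_{j=0}^{J} n^j P_j; explicitly, suppose that for every m ∈ ℤ one has Σ_{j=0}^{J} Σ_{k∈ℤ} (m−k)^j · (coefficient of z^k in P_j g) = 0 (a finite sum since P_j g is a Laurent polynomial). Then the polynomial in the indeterminate ε given by ε ↦ Σ_{j=0}^{J} [ ((ε − z d/dz)^j (P_j g))(z) evaluated at z = 1 ] is identically zero in ℂ[ε]; that is, P(ε − z∂_z)g(z)|_{z=1} = 0 as a polynomial in ε. -/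

import Mathlib

noncomputable section

/-- The derivative `d/dz` on complex Laurent polynomials: `z^n ↦ n z^(n-1)`. -/
def lderiv (g : LaurentPolynomial ℂ) : LaurentPolynomial ℂ :=
  Finsupp.sum (AddMonoidAlgebra.coeff g : ℤ →₀ ℂ) fun n c =>
    (n : ℂ) • (LaurentPolynomial.C c * LaurentPolynomial.T (n - 1))

/-- The coefficient of `z^k` in a Laurent polynomial. -/
def lcoeff (g : LaurentPolynomial ℂ) (k : ℤ) : ℂ := (AddMonoidAlgebra.coeff g : ℤ →₀ ℂ) k

/-- Evaluation of a Laurent polynomial at `z = 1`, i.e. the sum of its coefficients. -/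
def evalOne (g : LaurentPolynomial ℂ) : ℂ := Finsupp.sum (AddMonoidAlgebra.coeff g : ℤ →₀ ℂ) fun _ c => c

/-- The operator `ε − z d/dz` acting `ℂ[ε]`-linearly on `ℂ[ε] ⊗ ℂ[z,z⁻¹]`, realized on
polynomials in `ε` with Laurent-polynomial coefficients. -/
def epsOp (h : Polynomial (LaurentPolynomial ℂ)) : Polynomial (LaurentPolynomial ℂ) :=
  Polynomial.X * h -
    Polynomial.sum h fun i c =>
      Polynomial.C (LaurentPolynomial.T 1 * lderiv c) * Polynomial.X ^ i

/-- Evaluation at `z = 1` of a polynomial in `ε` with Laurent-polynomial coefficients,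
yielding a polynomial in `ε`. -/
def evalZOne (h : Polynomial (LaurentPolynomial ℂ)) : Polynomial ℂ :=
  Polynomial.sum h fun i c => Polynomial.C (evalOne c) * Polynomial.X ^ i

open Polynomial LaurentPolynomial

lemma lderiv_single (k : ℤ) (d : ℂ) :
    lderiv (AddMonoidAlgebra.single k d : LaurentPolynomial ℂ) =
      (k : ℂ) • (AddMonoidAlgebra.single (k - 1) d : LaurentPolynomial ℂ) := by
  rw [lderiv, AddMonoidAlgebra.sum_single_index (by simp), single_eq_C_mul_T]

lemma lderiv_C_mul_T (k : ℤ) (d : ℂ) :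
    lderiv (LaurentPolynomial.C d * T k) =
      (k : ℂ) • (LaurentPolynomial.C d * T (k - 1)) := by
  rw [← single_eq_C_mul_T, lderiv_single, single_eq_C_mul_T]

lemma lderiv_zero' : lderiv 0 = 0 := by
  rw [lderiv, AddMonoidAlgebra.coeff_zero]; exact Finsupp.sum_zero_index

lemma lderiv_add (a b : LaurentPolynomial ℂ) : lderiv (a + b) = lderiv a + lderiv b := by
  rw [lderiv, lderiv, lderiv, AddMonoidAlgebra.coeff_add]
  exact Finsupp.sum_add_index (by simp) (by intros; rw [map_add, add_mul, smul_add])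

lemma epsOp_add (h₁ h₂ : Polynomial (LaurentPolynomial ℂ)) :
    epsOp (h₁ + h₂) = epsOp h₁ + epsOp h₂ := by
  rw [epsOp, epsOp, epsOp,
    Polynomial.sum_add_index h₁ h₂ _ (by simp [lderiv_zero'])
      (fun a b₁ b₂ => by rw [lderiv_add, mul_add, map_add, add_mul])]
  ring

lemma epsOp_key (k : ℤ) (c : ℂ) (q : Polynomial ℂ) :
    epsOp (q.map (algebraMap ℂ (LaurentPolynomial ℂ)) *
        Polynomial.C (LaurentPolynomial.C c * T k)) =
    ((Polynomial.X - Polynomial.C (k : ℂ)) * q).map (algebraMap ℂ (LaurentPolynomial ℂ)) *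
      Polynomial.C (LaurentPolynomial.C c * T k) := by
  set H := q.map (algebraMap ℂ (LaurentPolynomial ℂ)) *
      Polynomial.C (LaurentPolynomial.C c * T k) with hH
  have hcoeff : ∀ i, H.coeff i = LaurentPolynomial.C (q.coeff i * c) * T k := by
    intro i
    rw [hH, Polynomial.coeff_mul_C, Polynomial.coeff_map, ← LaurentPolynomial.C_eq_algebraMap, ← mul_assoc,
      ← map_mul]
  have hterm : ∀ i, LaurentPolynomial.T 1 * lderiv (H.coeff i) = (k : ℂ) • H.coeff i := by
    intro i
    rw [hcoeff, lderiv_C_mul_T, mul_smul_comm, T_mul, mul_assoc, ← T_add, sub_add_cancel]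
  have hsum : (Polynomial.sum H fun i c => Polynomial.C (LaurentPolynomial.T 1 * lderiv c) *
      Polynomial.X ^ i) = (k : ℂ) • H := by
    rw [Polynomial.sum_def]
    calc (∑ i ∈ H.support, Polynomial.C (LaurentPolynomial.T 1 * lderiv (H.coeff i)) *
            Polynomial.X ^ i)
        = ∑ i ∈ H.support, (k : ℂ) • (Polynomial.C (H.coeff i) * Polynomial.X ^ i) := by
          refine Finset.sum_congr rfl fun i _ => ?_
          rw [hterm i, ← Polynomial.smul_C, smul_mul_assoc]
      _ = (k : ℂ) • H := by
          rw [← Finset.smul_sum, ← Polynomial.as_sum_support_C_mul_X_pow]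
  rw [epsOp, hsum, Algebra.smul_def, Polynomial.algebraMap_apply, Polynomial.map_mul,
    Polynomial.map_sub, Polynomial.map_X, Polynomial.map_C, hH]
  ring

lemma epsOp_iter (j : ℕ) (k : ℤ) (c : ℂ) :
    epsOp^[j] (Polynomial.C (LaurentPolynomial.C c * T k)) =
    ((Polynomial.X - Polynomial.C (k : ℂ)) ^ j).map (algebraMap ℂ (LaurentPolynomial ℂ)) *
      Polynomial.C (LaurentPolynomial.C c * T k) := by
  induction j with
  | zero => simp
  | succ j ih =>
    rw [Function.iterate_succ_apply', ih, epsOp_key, pow_succ']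

def E : LaurentPolynomial ℂ →ₐ[ℂ] ℂ := AddMonoidAlgebra.lift ℂ ℂ ℤ 1

lemma E_eq (g : LaurentPolynomial ℂ) : E g = evalOne g := by
  rw [E, AddMonoidAlgebra.lift_apply, evalOne]
  simp

lemma evalZOne_eq_map (h : Polynomial (LaurentPolynomial ℂ)) :
    evalZOne h = h.map (E : LaurentPolynomial ℂ →+* ℂ) := by
  rw [evalZOne, Polynomial.map, Polynomial.eval₂_eq_sum]
  simp [E_eq]

lemma evalZOne_add (a b : Polynomial (LaurentPolynomial ℂ)) :
    evalZOne (a + b) = evalZOne a + evalZOne b := by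
  rw [evalZOne_eq_map, evalZOne_eq_map, evalZOne_eq_map, Polynomial.map_add]

lemma epsOp_iter_add (j : ℕ) (a b : Polynomial (LaurentPolynomial ℂ)) :
    epsOp^[j] (a + b) = epsOp^[j] a + epsOp^[j] b := by
  induction j generalizing a b with
  | zero => simp
  | succ j ih =>
    rw [Function.iterate_succ_apply, epsOp_add, ih, Function.iterate_succ_apply,
      Function.iterate_succ_apply]

lemma evalZOne_iter (j : ℕ) (k : ℤ) (c : ℂ) :
    evalZOne (epsOp^[j] (Polynomial.C (LaurentPolynomial.C c * T k))) =
    (Polynomial.X - Polynomial.C (k : ℂ)) ^ j * Polynomial.C c := by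
  rw [epsOp_iter, evalZOne_eq_map, Polynomial.map_mul, Polynomial.map_map, Polynomial.map_C]
  have h1 : (E : LaurentPolynomial ℂ →+* ℂ).comp (algebraMap ℂ (LaurentPolynomial ℂ)) =
      RingHom.id ℂ := RingHom.ext fun x => by
        rw [RingHom.comp_apply, RingHom.id_apply, AlgHom.coe_toRingHom, E.commutes x]
        rfl
      -- keep
  have h2 : E (LaurentPolynomial.C c * T k) = c := by
    rw [E_eq, ← single_eq_C_mul_T, evalOne, AddMonoidAlgebra.sum_single_index rfl]
  rw [h1, Polynomial.map_id]
  exact congrArg (fun t => (Polynomial.X - Polynomial.C (k:ℂ))^j * Polynomial.C t) h2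

lemma main_j (j : ℕ) (g : LaurentPolynomial ℂ) :
    evalZOne (epsOp^[j] (Polynomial.C g)) =
    Finsupp.sum (AddMonoidAlgebra.coeff g : ℤ →₀ ℂ) fun k c =>
      (Polynomial.X - Polynomial.C (k : ℂ)) ^ j * Polynomial.C c := by
  induction g using LaurentPolynomial.induction_on' with
  | add p q hp hq =>
    rw [map_add, epsOp_iter_add, evalZOne_add, hp, hq, AddMonoidAlgebra.coeff_add]
    exact (Finsupp.sum_add_index (by simp) (by intros; rw [map_add, mul_add])).symm
  | C_mul_T n a =>
    rw [evalZOne_iter, ← single_eq_C_mul_T, AddMonoidAlgebra.sum_single_index (by simp)]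

/-- Billig's lemma: if `P(n) = Σ_{j=0}^{J} n^j P_j` with
`P_j = Σ_{i=0}^{M} a_{j,i}(z) (d/dz)^i` and the formal series `Σ_{n∈ℤ} z^n P(n) g(z)`
vanishes, then `P(ε − z∂_z) g(z) |_{z=1} = 0` as a polynomial in `ε`. -/
theorem billig_lemma (J M : ℕ) (a : ℕ → ℕ → LaurentPolynomial ℂ)
    (g : LaurentPolynomial ℂ) (Pg : ℕ → LaurentPolynomial ℂ)
    (hPg : ∀ j, Pg j = ∑ i ∈ Finset.range (M + 1), a j i * lderiv^[i] g)
    (hvanish : ∀ m : ℤ,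
      ∑ j ∈ Finset.range (J + 1),
        (Finsupp.sum (AddMonoidAlgebra.coeff (Pg j) : ℤ →₀ ℂ) fun k c => ((m - k : ℤ) : ℂ) ^ j * c) = 0) :
    ∑ j ∈ Finset.range (J + 1), evalZOne (epsOp^[j] (Polynomial.C (Pg j))) = 0 := by
  have hrw : ∑ j ∈ Finset.range (J + 1), evalZOne (epsOp^[j] (Polynomial.C (Pg j))) =
      ∑ j ∈ Finset.range (J + 1), Finsupp.sum (AddMonoidAlgebra.coeff (Pg j) : ℤ →₀ ℂ) fun k c =>
        (Polynomial.X - Polynomial.C (k : ℂ)) ^ j * Polynomial.C c :=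
    Finset.sum_congr rfl fun j _ => main_j j (Pg j)
  rw [hrw]
  set Q : Polynomial ℂ := ∑ j ∈ Finset.range (J + 1), Finsupp.sum (AddMonoidAlgebra.coeff (Pg j) : ℤ →₀ ℂ) fun k c =>
      (Polynomial.X - Polynomial.C (k : ℂ)) ^ j * Polynomial.C c with hQ
  have hroot : ∀ m : ℤ, Q.IsRoot (m : ℂ) := by
    intro m
    have h := hvanish m
    rw [Polynomial.IsRoot, hQ, Polynomial.eval_finset_sum]
    rw [← h]
    refine Finset.sum_congr rfl fun j _ => ?_
    rw [Finsupp.sum, Finsupp.sum, Polynomial.eval_finset_sum]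
    refine Finset.sum_congr rfl fun k _ => ?_
    simp only [Polynomial.eval_mul, Polynomial.eval_pow, Polynomial.eval_sub, Polynomial.eval_X,
      Polynomial.eval_C]
    push_cast
    ring
  have : Q = 0 := by
    refine Polynomial.eq_zero_of_infinite_isRoot Q ?_
    refine Set.infinite_of_injective_forall_mem (f := fun n : ℕ => (n : ℂ)) Nat.cast_injective
      fun n => ?_
    have := hroot (n : ℤ)
    simpa using this
  exact this
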